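/- arXiv:1506.04438 — 2 statements merged into one kernel-verified Lean document; each statement's English description precedes it below -/
import Mathlib

section
/- For any phylogenetic network N on X, the unfolding U(N), obtained from the path-tree U*(N) (whose vertices are the directed paths in N starting at the root, with an arc from π to πa for each arc a of N) by suppressing all vertices of in-degree one and out-degree one, is a multi-labelled tree (MUL-tree) on X. -/
/-! Basic framework: labelled rooted directed multigraphs, phylogenetic
networks, (pseudo) MUL-trees, unfolding, folding maps, etc. -/

structure Dgr (X : Type) : Type 1 where
  V : Type
  A : Type
  tl : A → V
  hd : A → V
  root : V
  lab : V → Option X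

namespace Dgr

variable {X : Type}

/-- There is an arc from `u` to `v`. -/
def arcRel (G : Dgr X) (u v : G.V) : Prop := ∃ a : G.A, G.tl a = u ∧ G.hd a = v

/-- `v` is reachable from `u` by a directed path (possibly trivial);
equivalently, `v` is below `u` or equal to it. -/
def Reaches (G : Dgr X) : G.V → G.V → Prop := Relation.ReflTransGen G.arcRel

noncomputable def indeg (G : Dgr X) (v : G.V) : ℕ := Nat.card {a : G.A // G.hd a = v}
noncomputable def outdeg (G : Dgr X) (v : G.V) : ℕ := Nat.card {a : G.A // G.tl a = v}

def IsLeaf (G : Dgr X) (v : G.V) : Prop := G.outdeg v = 0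

def Acyclic (G : Dgr X) : Prop := ∀ v, ¬ Relation.TransGen G.arcRel v v

/-- A finite rooted DAG: acyclic, the root has in-degree zero and every
vertex is reachable from the root. -/
def IsRootedDAG (G : Dgr X) : Prop :=
  Finite G.V ∧ Finite G.A ∧ G.Acyclic ∧ G.indeg G.root = 0 ∧ ∀ v, G.Reaches G.root v

/-- A tree vertex: in-degree one, out-degree zero (a leaf) or at least two. -/
def IsTreeVertex (G : Dgr X) (v : G.V) : Prop :=
  G.indeg v = 1 ∧ (G.outdeg v = 0 ∨ 2 ≤ G.outdeg v)

/-- A reticulation vertex: out-degree one and in-degree at least two. -/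
def IsRetVertex (G : Dgr X) (v : G.V) : Prop := G.outdeg v = 1 ∧ 2 ≤ G.indeg v

/-- An `X`-network: rooted DAG (multi-arcs allowed), root of out-degree ≥ 2,
every non-root vertex a tree vertex or a reticulation vertex, and the leaves
are labelled bijectively by `X`. -/
def IsXNetwork (G : Dgr X) : Prop :=
  G.IsRootedDAG ∧ 2 ≤ G.outdeg G.root ∧
  (∀ v, v ≠ G.root → G.IsTreeVertex v ∨ G.IsRetVertex v) ∧
  (∀ v, (∃ x, G.lab v = some x) ↔ G.IsLeaf v) ∧
  (∀ x : X, ∃! v, G.lab v = some x)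

def NoMultiArcs (G : Dgr X) : Prop :=
  ∀ a b : G.A, G.tl a = G.tl b → G.hd a = G.hd b → a = b

/-- A phylogenetic network on `X`: an `X`-network without multi-arcs. -/
def IsPhyloNetwork (G : Dgr X) : Prop := G.IsXNetwork ∧ G.NoMultiArcs

/-- A phylogenetic tree on `X`: a phylogenetic network with no reticulations. -/
def IsPhyloTree (G : Dgr X) : Prop := G.IsPhyloNetwork ∧ ∀ v, ¬ G.IsRetVertex v

/-- A pseudo MUL-tree on `X`: a finite rooted tree whose leaves are labelled
by elements of `X` (several leaves may share a label, every element of `X`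
is used, and exactly the leaves are labelled). -/
def IsPMulTree (G : Dgr X) : Prop :=
  G.IsRootedDAG ∧ (∀ v, v ≠ G.root → G.indeg v = 1) ∧
  (∀ v, (∃ x, G.lab v = some x) ↔ G.IsLeaf v) ∧
  (∀ x : X, ∃ v, G.lab v = some x)

/-- A MUL-tree: a pseudo MUL-tree with no in-degree-one out-degree-one vertex. -/
def IsMulTree (G : Dgr X) : Prop :=
  G.IsPMulTree ∧ ∀ v, ¬ (G.indeg v = 1 ∧ G.outdeg v = 1)

/-- Isomorphism of labelled rooted directed multigraphs. -/
def Iso (G H : Dgr X) : Prop :=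
  ∃ (φ : G.V ≃ H.V) (ψ : G.A ≃ H.A),
    (∀ a, H.tl (ψ a) = φ (G.tl a)) ∧ (∀ a, H.hd (ψ a) = φ (G.hd a)) ∧
    φ G.root = H.root ∧ (∀ v, H.lab (φ v) = G.lab v)

/-- The pendant subgraph rooted at `v` (everything below or equal to `v`). -/
def pendant (G : Dgr X) (v : G.V) : Dgr X where
  V := {w : G.V // G.Reaches v w}
  A := {a : G.A // G.Reaches v (G.tl a)}
  tl a := ⟨G.tl a.1, a.2⟩
  hd a := ⟨G.hd a.1, a.2.tail ⟨a.1, rfl, rfl⟩⟩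
  root := ⟨v, Relation.ReflTransGen.refl⟩
  lab w := G.lab w.1

/-- Directed paths in `G` starting at the root, ending at the index vertex. -/
inductive RPath (G : Dgr X) : G.V → Type
  | nil : RPath G G.root
  | cons {v : G.V} (p : RPath G v) (a : G.A) (h : G.tl a = v) : RPath G (G.hd a)

/-- The path-tree `U*(G)`: vertices are directed root-paths of `G`, arcs are
one-arc extensions, the label of a path is the label of its last vertex. -/
def Ustar (G : Dgr X) : Dgr X where
  V := Σ v : G.V, RPath G v
  A := Σ v : G.V, RPath G v × {a : G.A // G.tl a = v}
  tl x := ⟨x.1, x.2.1⟩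
  hd x := ⟨G.hd x.2.2.1, RPath.cons x.2.1 x.2.2.1 x.2.2.2⟩
  root := ⟨G.root, RPath.nil⟩
  lab x := G.lab x.1

/-- Vertices kept by the suppression operation (the root is always kept). -/
def Keep (G : Dgr X) (v : G.V) : Prop :=
  v = G.root ∨ ¬ (G.indeg v = 1 ∧ G.outdeg v = 1)

def startV (G : Dgr X) (l : List G.A) : G.V :=
  match l.head? with
  | some a => G.tl a
  | none => G.root

def endV (G : Dgr X) (l : List G.A) : G.V :=
  match l.getLast? with
  | some a => G.hd a
  | none => G.root

/-- `l` is a composable sequence of arcs. -/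
def IsChain (G : Dgr X) (l : List G.A) : Prop :=
  ∀ p a b s, l = p ++ a :: b :: s → G.hd a = G.tl b

/-- An arc of the suppression: a nonempty directed path between kept vertices
all of whose intermediate vertices are suppressed. -/
def IsSuppArc (G : Dgr X) (l : List G.A) : Prop :=
  l ≠ [] ∧ G.IsChain l ∧ G.Keep (G.startV l) ∧ G.Keep (G.endV l) ∧
  ∀ p a s, l = p ++ a :: s → s ≠ [] → ¬ G.Keep (G.hd a)

/-- Suppression of all in-degree-one out-degree-one vertices. -/
def suppress (G : Dgr X) : Dgr X where
  V := {v : G.V // G.Keep v}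
  A := {l : List G.A // G.IsSuppArc l}
  tl l := ⟨G.startV l.1, l.2.2.2.1⟩
  hd l := ⟨G.endV l.1, l.2.2.2.2.1⟩
  root := ⟨G.root, Or.inl rfl⟩
  lab v := G.lab v.1

/-- The unfolding `U(G)`: the path-tree with in-degree-one out-degree-one
vertices suppressed. -/
def U (G : Dgr X) : Dgr X := G.Ustar.suppress

/-- An `X`-morphism: maps on vertices and arcs commuting with heads and tails
and preserving the leaf-labelling by `X`. -/
structure Mor (G H : Dgr X) where
  fV : G.V → H.V
  fA : G.A → H.A
  tl_comm : ∀ a, H.tl (fA a) = fV (G.tl a)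
  hd_comm : ∀ a, H.hd (fA a) = fV (G.hd a)
  lab_pres : ∀ v x, G.lab v = some x → H.lab (fV v) = some x

def Mor.IsRooted {G H : Dgr X} (f : Mor G H) : Prop := f.fV G.root = H.root

/-- A folding map: a surjective `X`-morphism with the unique arc-lifting
property. -/
def Mor.IsFolding {G H : Dgr X} (f : Mor G H) : Prop :=
  Function.Surjective f.fV ∧ Function.Surjective f.fA ∧
  ∀ (a : H.A) (v : G.V), f.fV v = H.tl a →
    ∃! b : G.A, G.tl b = v ∧ f.fA b = a

/-- The canonical map `U*(G) → G` sending a root-path to its last vertex. -/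
def fstar (G : Dgr X) : Mor G.Ustar G where
  fV x := x.1
  fA x := x.2.2.1
  tl_comm a := a.2.2.2
  hd_comm _ := rfl
  lab_pres _ _ h := h

/-- `v` is an interior vertex of the arc-sequence `l`. -/
def IsInteriorOf (G : Dgr X) (l : List G.A) (v : G.V) : Prop :=
  ∃ p a s, l = p ++ a :: s ∧ s ≠ [] ∧ G.hd a = v

/-- `G'` is a subdivision of `G`. -/
def IsSubdivisionOf (G' G : Dgr X) : Prop :=
  ∃ (φ : G.V → G'.V) (ψ : G.A → List G'.A),
    Function.Injective φ ∧ φ G.root = G'.root ∧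
    (∀ v, G'.lab (φ v) = G.lab v) ∧
    (∀ a, ψ a ≠ [] ∧ G'.IsChain (ψ a) ∧ G'.startV (ψ a) = φ (G.tl a) ∧
      G'.endV (ψ a) = φ (G.hd a) ∧
      ∀ v, G'.IsInteriorOf (ψ a) v → v ∉ Set.range φ) ∧
    (∀ v' : G'.V, v' ∉ Set.range φ →
      G'.indeg v' = 1 ∧ G'.outdeg v' = 1 ∧ G'.lab v' = none) ∧
    (∀ a' : G'.A, ∃! a : G.A, a' ∈ ψ a)

/-- `H` is (isomorphic to) a subgraph of `G`. -/
def IsSubgraphOf (H G : Dgr X) : Prop :=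
  ∃ (φ : H.V → G.V) (ψ : H.A → G.A),
    Function.Injective φ ∧ Function.Injective ψ ∧
    (∀ a, G.tl (ψ a) = φ (H.tl a)) ∧ (∀ a, G.hd (ψ a) = φ (H.hd a)) ∧
    (∀ v, H.lab v = G.lab (φ v))

/-- `G` displays `T`: some subgraph of `G` is a subdivision of `T`. -/
def Displays (G T : Dgr X) : Prop :=
  ∃ H : Dgr X, IsSubgraphOf H G ∧ IsSubdivisionOf H T

/-- `T` is weakly displayed by `G`: `T` is displayed by the unfolding `U(G)`. -/
def WeaklyDisplays (G T : Dgr X) : Prop := Displays G.U T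

/-- `N` is (isomorphic to) the folding `F(T)` of the MUL-tree `T`: `N` is an
`X`-network obtained as the quotient of a subdivision `T'` of `T` by the
relation identifying vertices with isomorphic pendant subtrees, the quotient
map being a folding map whose fibres are exactly the classes of that relation. -/
def IsFoldingOf (N T : Dgr X) : Prop :=
  N.IsXNetwork ∧ ∃ T' : Dgr X, IsSubdivisionOf T' T ∧
    ∃ f : Mor T' N, f.IsFolding ∧
      ∀ u v : T'.V, f.fV u = f.fV v ↔ Iso (T'.pendant u) (T'.pendant v)

/-- `N` is stable: `F(U(N))` is isomorphic to `N`. -/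
def Stable (N : Dgr X) : Prop :=
  ∃ N' : Dgr X, IsFoldingOf N' N.U ∧ Iso N' N

/-- `T'` is the guide tree `T†` of the folding operation applied to `T`:
a subdivision of `T` whose quotient by the isomorphic-pendant-subtree
relation is an `X`-network via a folding map. -/
def IsDaggerOf (T' T : Dgr X) : Prop :=
  IsSubdivisionOf T' T ∧ ∃ (N : Dgr X) (f : Mor T' N), N.IsXNetwork ∧
    f.IsFolding ∧
    ∀ u v : T'.V, f.fV u = f.fV v ↔ Iso (T'.pendant u) (T'.pendant v)

/-- The child of every reticulation vertex is a tree vertex. -/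
def Compressed (N : Dgr X) : Prop :=
  ∀ a : N.A, N.IsRetVertex (N.tl a) → N.IsTreeVertex (N.hd a)

/-- Every (non-leaf) tree vertex has out-degree two. -/
def SemiResolved (N : Dgr X) : Prop :=
  ∀ v, N.indeg v = 1 → N.outdeg v = 0 ∨ N.outdeg v = 2

/-- Binary phylogenetic network. -/
def BinaryNet (N : Dgr X) : Prop :=
  N.outdeg N.root = 2 ∧ ∀ v, v ≠ N.root →
    (N.IsRetVertex v → N.indeg v = 2) ∧
    (N.indeg v = 1 → N.outdeg v = 0 ∨ N.outdeg v = 2)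

/-- Binary tree: every vertex has out-degree zero or two. -/
def BinaryTree (T : Dgr X) : Prop := ∀ v, T.outdeg v = 0 ∨ T.outdeg v = 2

/-- The set of children of a vertex. -/
def children (N : Dgr X) (v : N.V) : Set N.V := {w | ∃ a, N.tl a = v ∧ N.hd a = w}

/-- Tree-sibling network: every reticulation vertex has a sibling that is a
tree vertex. -/
def TreeSibling (N : Dgr X) : Prop :=
  ∀ v, N.IsRetVertex v → ∃ w, w ≠ v ∧ N.IsTreeVertex w ∧
    ∃ a b : N.A, N.tl a = N.tl b ∧ N.hd a = v ∧ N.hd b = w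

/-- The final vertex in `N` of (the path underlying) a vertex of `U(N)`. -/
def endOf (N : Dgr X) (p : N.U.V) : N.V := p.1.1

/-- Identifiable pair of tree vertices. -/
def Identifiable (N : Dgr X) (v w : N.V) : Prop :=
  v ≠ w ∧ N.IsTreeVertex v ∧ N.IsTreeVertex w ∧
  ∃ p q : N.U.V, N.endOf p = v ∧ N.endOf q = w ∧
    Iso (N.U.pendant p) (N.U.pendant q)

/-- Irreducible network: no identifiable pair of tree vertices. -/
def Irreducible (N : Dgr X) : Prop := ¬ ∃ v w, N.Identifiable v w

/-- The pendant subtree at `v` is inextendible: some other vertex carries an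
isomorphic pendant subtree. -/
def Inextendible (T : Dgr X) (v : T.V) : Prop :=
  ∃ v', v' ≠ v ∧ Iso (T.pendant v) (T.pendant v')

/-- A reconciliation map between a tree `T` and a network `N`. -/
structure Recon (T N : Dgr X) where
  r : T.V → N.V
  P : T.A → List N.A
  tree_or_root : ∀ v, r v = N.root ∨ N.IsTreeVertex (r v)
  leaf_fix : ∀ v x, T.lab v = some x → N.lab (r v) = some x
  chain : ∀ a, N.IsChain (P a)
  trivialP : ∀ a, P a = [] → r (T.tl a) = r (T.hd a)
  startP : ∀ a, P a ≠ [] → N.startV (P a) = r (T.tl a)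
  endP : ∀ a, P a ≠ [] → N.endV (P a) = r (T.hd a)

/-- Locally separated reconciliation: for any two distinct arcs of `T` with
the same tail, both associated paths are nonempty and have distinct initial
arcs. -/
def Recon.LocSep {T N : Dgr X} (ρ : Recon T N) : Prop :=
  ∀ a b : T.A, a ≠ b → T.tl a = T.tl b →
    ρ.P a ≠ [] ∧ ρ.P b ≠ [] ∧ (ρ.P a).head? ≠ (ρ.P b).head?

/-- The pendant subnetwork `N(u)`: restrict below `u` and suppress. -/
def Nsub (N : Dgr X) (u : N.V) : Dgr X := (N.pendant u).suppress

/-- The function `τ` of the dynamic program (as a proposition, `τ(v,u)=1`). -/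
def tau (T N : Dgr X) (v : T.V) (u : N.V) : Prop :=
  (T.IsLeaf v → ∀ x, T.lab v = some x →
     ∃ u' : N.V, N.lab u' = some x ∧ N.Reaches u u') ∧
  (¬ T.IsLeaf v → ∃ u' : N.V, (u' = N.root ∨ N.IsTreeVertex u') ∧
     N.Reaches u u' ∧ ∃ ρ : Recon (T.pendant v) (N.Nsub u'), ρ.LocSep)

/-- The result of `HangLeaves(v)` on the network `N` (new leaves are labelled
by the two new elements of `X ⊕ Fin 2`); vertices `inr 0, 1, 2, 3, 4` are
`x_v, x'_v, p_v, q_v, ρ_v` respectively. -/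
def HangN (N : Dgr X) (v : N.V) : Dgr (X ⊕ Fin 2) where
  V := N.V ⊕ Fin 5
  A := N.A ⊕ Fin 6
  tl := Sum.elim (fun a => Sum.inl (N.tl a))
    ![Sum.inr 4, Sum.inr 4, Sum.inr 2, Sum.inl v, Sum.inr 2, Sum.inr 3]
  hd := Sum.elim (fun a => Sum.inl (N.hd a))
    ![Sum.inl N.root, Sum.inr 2, Sum.inr 3, Sum.inr 3, Sum.inr 1, Sum.inr 0]
  root := Sum.inr 4
  lab := Sum.elim (fun w => (N.lab w).map Sum.inl)
    ![some (Sum.inr 0), some (Sum.inr 1), none, none, none]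

/-- The result of `HangLeaves` on the tree `T`; vertices `inr 0, 1, 2, 3` are
`x_v, x'_v, p_v, ρ_v` respectively. -/
def HangT (T : Dgr X) : Dgr (X ⊕ Fin 2) where
  V := T.V ⊕ Fin 4
  A := T.A ⊕ Fin 4
  tl := Sum.elim (fun a => Sum.inl (T.tl a))
    ![Sum.inr 3, Sum.inr 3, Sum.inr 2, Sum.inr 2]
  hd := Sum.elim (fun a => Sum.inl (T.hd a))
    ![Sum.inl T.root, Sum.inr 2, Sum.inr 0, Sum.inr 1]
  root := Sum.inr 3
  lab := Sum.elim (fun w => (T.lab w).map Sum.inl)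
    ![some (Sum.inr 0), some (Sum.inr 1), none, none]

end Dgr

/-! ### Auxiliary lemmas for the proof -/

namespace Dgr

variable {X : Type} {G : Dgr X}

section ChainAPI

lemma isChain_nil : G.IsChain [] := by
  intro p a b s h
  cases p <;> simp at h

lemma isChain_singleton (a : G.A) : G.IsChain [a] := by
  intro p c b s h
  have := congrArg List.length h
  simp at this
  omega

lemma IsChain.of_cons {a : G.A} {t : List G.A} (h : G.IsChain (a :: t)) : G.IsChain t :=
  fun p b c s hl => h (a :: p) b c s (by simp [hl])

lemma isChain_iff {l : List G.A} :
    G.IsChain l ↔ l.Chain' (fun a b => G.hd a = G.tl b) := by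
  constructor
  · intro h
    induction l with
    | nil => exact List.isChain_nil
    | cons a t ih =>
      unfold List.Chain'
      rw [List.isChain_cons]
      refine ⟨?_, ih h.of_cons⟩
      intro b hb
      cases t with
      | nil => simp at hb
      | cons c s =>
        simp only [List.head?_cons, Option.mem_def, Option.some.injEq] at hb
        subst hb
        exact h [] a _ s rfl
  · intro h p a b s hl
    have h2 : List.Chain' (fun a b => G.hd a = G.tl b) [a, b] :=
      h.infix ⟨p, s, by simp [hl]⟩
    exact (List.isChain_cons_cons.mp h2).1

lemma IsChain.append_left {l r : List G.A} (h : G.IsChain (l ++ r)) : G.IsChain l := by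
  rw [isChain_iff] at h ⊢
  exact (List.isChain_append.mp h).1

lemma startV_cons (a : G.A) (t : List G.A) : G.startV (a :: t) = G.tl a := rfl

lemma startV_singleton (a : G.A) : G.startV [a] = G.tl a := rfl

lemma startV_append {l r : List G.A} (h : l ≠ []) : G.startV (l ++ r) = G.startV l := by
  cases l with
  | nil => simp at h
  | cons a t => rfl

lemma startV_eq_of_head? {l : List G.A} {a : G.A} (h : l.head? = some a) :
    G.startV l = G.tl a := by
  cases l with
  | nil => simp at h
  | cons b t =>
    simp only [List.head?_cons, Option.some.injEq] at h
    subst h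
    rfl

lemma endV_concat (l : List G.A) (a : G.A) : G.endV (l ++ [a]) = G.hd a := by
  simp [endV]

lemma endV_singleton (a : G.A) : G.endV [a] = G.hd a := endV_concat [] a

lemma endV_cons {t : List G.A} (a : G.A) (h : t ≠ []) : G.endV (a :: t) = G.endV t := by
  obtain ⟨L, b, rfl⟩ := t.eq_nil_or_concat'.resolve_left h
  rw [show a :: (L ++ [b]) = (a :: L) ++ [b] from rfl, endV_concat, endV_concat]

lemma endV_eq_of_getLast? {l : List G.A} {a : G.A} (h : l.getLast? = some a) :
    G.endV l = G.hd a := by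
  simp [endV, h]

lemma IsChain.append {l r : List G.A} (hl : G.IsChain l) (hr : G.IsChain r)
    (h : G.endV l = G.startV r) : G.IsChain (l ++ r) := by
  rw [isChain_iff] at hl hr ⊢
  unfold List.Chain'
  rw [List.isChain_append]
  refine ⟨hl, hr, ?_⟩
  intro x hx y hy
  rw [Option.mem_def] at hx hy
  have h1 : G.endV l = G.hd x := endV_eq_of_getLast? hx
  have h2 : G.startV r = G.tl y := startV_eq_of_head? hy
  rw [← h1, ← h2]
  exact h

lemma IsChain.transGen_startV_endV {l : List G.A} (hc : G.IsChain l) (h : l ≠ []) :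
    Relation.TransGen G.arcRel (G.startV l) (G.endV l) := by
  induction l with
  | nil => simp at h
  | cons a t ih =>
    cases t with
    | nil =>
      rw [startV_singleton, endV_singleton]
      exact Relation.TransGen.single ⟨a, rfl, rfl⟩
    | cons b s =>
      have hab : G.hd a = G.tl b := hc [] a b s rfl
      have ht := ih hc.of_cons (by simp)
      rw [startV_cons] at ht
      rw [startV_cons, endV_cons a (by simp)]
      refine Relation.TransGen.head ⟨a, rfl, rfl⟩ ?_
      rwa [hab]

lemma IsChain.nodup (hAc : G.Acyclic) {l : List G.A} (hc : G.IsChain l) : l.Nodup := by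
  induction l with
  | nil => simp
  | cons a t ih =>
    refine List.nodup_cons.2 ⟨?_, ih hc.of_cons⟩
    intro ha
    obtain ⟨m, s, rfl⟩ := List.append_of_mem ha
    cases m with
    | nil =>
      have hab : G.hd a = G.tl a := hc [] a a s rfl
      exact hAc (G.hd a) (Relation.TransGen.single ⟨a, hab.symm, rfl⟩)
    | cons c m' =>
      have hac : G.hd a = G.tl c := hc [] a c (m' ++ a :: s) rfl
      have hchain : G.IsChain ((c :: m' ++ [a]) ++ s) := by
        have : c :: m' ++ a :: s = (c :: m' ++ [a]) ++ s := by simp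
        exact this ▸ hc.of_cons
      have hchain2 : G.IsChain (c :: m' ++ [a]) := hchain.append_left
      have := hchain2.transGen_startV_endV (by simp)
      rw [endV_concat] at this
      rw [show G.startV (c :: m' ++ [a]) = G.tl c from rfl] at this
      rw [hac] at this
      exact hAc (G.tl c) this
end ChainAPI

section Helpers

lemma keep_root : G.Keep G.root := Or.inl rfl

lemma not_keep {v : G.V} (h : ¬ G.Keep v) :
    v ≠ G.root ∧ G.indeg v = 1 ∧ G.outdeg v = 1 := by
  rw [Keep] at h
  push_neg at h
  exact ⟨h.1, h.2⟩

lemma acyclic_wf (hV : Finite G.V) (hAc : G.Acyclic) :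
    WellFounded (Relation.TransGen G.arcRel) := by
  haveI := hV
  haveI : IsIrrefl G.V (Relation.TransGen G.arcRel) := ⟨hAc⟩
  haveI : IsTrans G.V (Relation.TransGen G.arcRel) := ⟨fun _ _ _ h h' => h.trans h'⟩
  exact Finite.wellFounded_of_trans_of_irrefl _

lemma acyclic_wf_flip (hV : Finite G.V) (hAc : G.Acyclic) :
    WellFounded (Relation.TransGen (flip G.arcRel)) := by
  haveI := hV
  haveI : IsIrrefl G.V (Relation.TransGen (flip G.arcRel)) :=
    ⟨fun v h => hAc v (Relation.transGen_swap.mp h)⟩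
  haveI : IsTrans G.V (Relation.TransGen (flip G.arcRel)) := ⟨fun _ _ _ h h' => h.trans h'⟩
  exact Finite.wellFounded_of_trans_of_irrefl _

namespace IsPMulTree

lemma finV (h : G.IsPMulTree) : Finite G.V := h.1.1
lemma finA (h : G.IsPMulTree) : Finite G.A := h.1.2.1
lemma acyclic (h : G.IsPMulTree) : G.Acyclic := h.1.2.2.1
lemma root0 (h : G.IsPMulTree) : G.indeg G.root = 0 := h.1.2.2.2.1
lemma reach (h : G.IsPMulTree) : ∀ v, G.Reaches G.root v := h.1.2.2.2.2
lemma deg1 (h : G.IsPMulTree) : ∀ v, v ≠ G.root → G.indeg v = 1 := h.2.1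
lemma labiff (h : G.IsPMulTree) : ∀ v, (∃ x, G.lab v = some x) ↔ G.IsLeaf v := h.2.2.1
lemma labsurj (h : G.IsPMulTree) : ∀ x : X, ∃ v, G.lab v = some x := h.2.2.2

end IsPMulTree

lemma no_arc_into_root (hG : G.IsPMulTree) : ∀ a : G.A, G.hd a ≠ G.root := by
  intro a ha
  haveI := hG.finA
  haveI : Nonempty {b : G.A // G.hd b = G.root} := ⟨⟨a, ha⟩⟩
  have h1 : 0 < G.indeg G.root := Nat.card_pos
  rw [hG.root0] at h1
  omega

lemma arc_into_unique (hG : G.IsPMulTree) {v : G.V} (hv : v ≠ G.root) :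
    ∃! a : G.A, G.hd a = v := by
  have h1 : G.indeg v = 1 := hG.deg1 v hv
  rw [indeg, Nat.card_eq_one_iff_exists] at h1
  obtain ⟨⟨a, ha⟩, hu⟩ := h1
  exact ⟨a, ha, fun b hb => congrArg Subtype.val (hu ⟨b, hb⟩)⟩

lemma no_arc_out (hA : Finite G.A) {v : G.V} (hv : G.outdeg v = 0) :
    ∀ a : G.A, G.tl a ≠ v := by
  intro a ha
  haveI := hA
  haveI : Nonempty {b : G.A // G.tl b = v} := ⟨⟨a, ha⟩⟩
  have h1 : 0 < G.outdeg v := Nat.card_pos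
  omega

lemma arc_out_exists {v : G.V} (hv : G.outdeg v = 1) : ∃ a : G.A, G.tl a = v := by
  rw [outdeg, Nat.card_eq_one_iff_exists] at hv
  obtain ⟨⟨a, ha⟩, -⟩ := hv
  exact ⟨a, ha⟩

end Helpers

section Pre

/-- A nonempty chain with kept start and all interior vertices suppressed. -/
def Pre (G : Dgr X) (l : List G.A) : Prop :=
  l ≠ [] ∧ G.IsChain l ∧ G.Keep (G.startV l) ∧
    ∀ p a s, l = p ++ a :: s → s ≠ [] → ¬ G.Keep (G.hd a)

lemma isSuppArc_iff {l : List G.A} :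
    G.IsSuppArc l ↔ G.Pre l ∧ G.Keep (G.endV l) :=
  ⟨fun ⟨h1, h2, h3, h4, h5⟩ => ⟨⟨h1, h2, h3, h5⟩, h4⟩,
   fun ⟨⟨h1, h2, h3, h5⟩, h4⟩ => ⟨h1, h2, h3, h4, h5⟩⟩

lemma pre_unique (hG : G.IsPMulTree) :
    ∀ (n : ℕ) (l l' : List G.A), l.length ≤ n → G.Pre l → G.Pre l' →
      G.endV l = G.endV l' → l = l' := by
  intro n
  induction n with
  | zero =>
    intro l l' hl hp _ _
    cases l with
    | nil => exact absurd rfl hp.1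
    | cons a t => simp at hl
  | succ n ih =>
    intro l l' hlen hp hp' hend
    obtain ⟨p, a, rfl⟩ := l.eq_nil_or_concat'.resolve_left hp.1
    obtain ⟨p', a', rfl⟩ := l'.eq_nil_or_concat'.resolve_left hp'.1
    rw [endV_concat, endV_concat] at hend
    obtain ⟨c, hc, hcu⟩ := arc_into_unique hG (no_arc_into_root hG a)
    obtain rfl : a = a' := (hcu a rfl).trans (hcu a' hend.symm).symm
    by_cases hp0 : p = []
    · by_cases hp0' : p' = []
      · rw [hp0, hp0']
      · exfalso
        obtain ⟨q, b, rfl⟩ := p'.eq_nil_or_concat'.resolve_left hp0'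
        have hb : G.hd b = G.tl a := hp'.2.1 q b a [] (by simp)
        have hnk : ¬ G.Keep (G.hd b) := hp'.2.2.2 q b [a] (by simp) (by simp)
        subst hp0
        have hk : G.Keep (G.tl a) := hp.2.2.1
        exact hnk (hb ▸ hk)
    · by_cases hp0' : p' = []
      · exfalso
        obtain ⟨q, b, rfl⟩ := p.eq_nil_or_concat'.resolve_left hp0
        have hb : G.hd b = G.tl a := hp.2.1 q b a [] (by simp)
        have hnk : ¬ G.Keep (G.hd b) := hp.2.2.2 q b [a] (by simp) (by simp)
        subst hp0'
        have hk : G.Keep (G.tl a) := hp'.2.2.1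
        exact hnk (hb ▸ hk)
      · obtain ⟨q, b, rfl⟩ := p.eq_nil_or_concat'.resolve_left hp0
        obtain ⟨q', b', rfl⟩ := p'.eq_nil_or_concat'.resolve_left hp0'
        have hpre : G.Pre (q ++ [b]) :=
          ⟨by simp, hp.2.1.append_left, by have := hp.2.2.1; rwa [startV_append (by simp)] at this,
           fun r c s hr hs => hp.2.2.2 r c (s ++ [a]) (by simp [hr]) (by simp)⟩
        have hpre' : G.Pre (q' ++ [b']) :=
          ⟨by simp, hp'.2.1.append_left, by have := hp'.2.2.1; rwa [startV_append (by simp)] at this,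
           fun r c s hr hs => hp'.2.2.2 r c (s ++ [a]) (by simp [hr]) (by simp)⟩
        have hendb : G.endV (q ++ [b]) = G.endV (q' ++ [b']) := by
          rw [endV_concat, endV_concat]
          rw [hp.2.1 q b a [] (by simp), hp'.2.1 q' b' a [] (by simp)]
        have hlen2 : (q ++ [b]).length ≤ n := by
          have := hlen
          simp at this ⊢
          omega
        have := ih (q ++ [b]) (q' ++ [b']) hlen2 hpre hpre' hendb
        rw [this]

end Pre

section Exists

lemma singleton_no_interior (a : G.A) :
    ∀ p (b : G.A) s, [a] = p ++ b :: s → s ≠ [] → ¬ G.Keep (G.hd b) := by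
  intro p b s h hs
  exfalso
  have := congrArg List.length h
  simp at this
  exact hs (List.length_eq_zero_iff.mp (by omega))

lemma exists_pre_into (hG : G.IsPMulTree) :
    ∀ v, v ≠ G.root → ∃ l, G.Pre l ∧ G.endV l = v := by
  have wf := acyclic_wf hG.finV hG.acyclic
  intro v
  induction v using wf.induction with
  | _ v ih =>
    intro hv
    obtain ⟨a, ha, -⟩ := arc_into_unique hG hv
    by_cases hk : G.Keep (G.tl a)
    · exact ⟨[a], ⟨by simp, isChain_singleton a, hk, singleton_no_interior a⟩,
        by rw [endV_singleton, ha]⟩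
    · have hne : G.tl a ≠ G.root := fun h => hk (h ▸ keep_root)
      have hstep : Relation.TransGen G.arcRel (G.tl a) v := .single ⟨a, rfl, ha⟩
      obtain ⟨l, hl, hle⟩ := ih (G.tl a) hstep hne
      refine ⟨l ++ [a], ⟨by simp,
        hl.2.1.append (isChain_singleton a) (by rw [hle, startV_singleton]),
        by have := hl.2.2.1; rwa [startV_append hl.1], ?_⟩,
        by rw [endV_concat, ha]⟩
      intro q b s hq hs
      obtain ⟨s₀, c, rfl⟩ := s.eq_nil_or_concat'.resolve_left hs
      have hq2 : l ++ [a] = (q ++ b :: s₀) ++ [c] := by simp [hq]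
      obtain ⟨h1, h2⟩ := List.append_inj' hq2 rfl
      cases s₀ with
      | nil =>
        have : G.endV l = G.hd b := by rw [h1, endV_concat]
        rw [hle] at this
        rw [← this]
        exact hk
      | cons d s₁ =>
        exact hl.2.2.2 q b (d :: s₁) h1 (by simp)

lemma exists_supp_from (hG : G.IsPMulTree) (a : G.A) (hk : G.Keep (G.tl a)) :
    ∃ l, G.IsSuppArc l ∧ l.head? = some a := by
  have wf := acyclic_wf_flip hG.finV hG.acyclic
  suffices h : ∀ w (a : G.A), G.hd a = w → ∃ l, l ≠ [] ∧ G.IsChain l ∧ l.head? = some a ∧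
      (∀ p b s, l = p ++ b :: s → s ≠ [] → ¬ G.Keep (G.hd b)) ∧ G.Keep (G.endV l) by
    obtain ⟨l, h1, h2, h3, h4, h5⟩ := h (G.hd a) a rfl
    exact ⟨l, ⟨h1, h2, by rwa [startV_eq_of_head? h3], h5, h4⟩, h3⟩
  intro w
  induction w using wf.induction with
  | _ w ih =>
    intro a ha
    by_cases hk : G.Keep w
    · exact ⟨[a], by simp, isChain_singleton a, rfl, singleton_no_interior a,
        by rw [endV_singleton, ha]; exact hk⟩
    · obtain ⟨hwr, hin, hout⟩ := not_keep hk
      obtain ⟨b, hb⟩ := arc_out_exists hout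
      have hstep : Relation.TransGen (flip G.arcRel) (G.hd b) w := .single ⟨b, hb, rfl⟩
      obtain ⟨l, h1, h2, h3, h4, h5⟩ := ih (G.hd b) hstep b rfl
      refine ⟨a :: l, by simp, ?_, rfl, ?_, by rwa [endV_cons a h1]⟩
      · have hc := (isChain_singleton a).append h2
          (by rw [endV_singleton, startV_eq_of_head? h3, hb, ha])
        simpa using hc
      · intro p c s hp hs
        cases p with
        | nil =>
          simp only [List.nil_append, List.cons.injEq] at hp
          obtain ⟨rfl, -⟩ := hp
          rw [ha]
          exact hk
        | cons d p' =>
          simp only [List.cons_append, List.cons.injEq] at hp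
          exact h4 p' c s hp.2 hs

end Exists

section Suppress

lemma pre_of_suppArc {l : List G.A} (h : G.IsSuppArc l) : G.Pre l :=
  (isSuppArc_iff.mp h).1

lemma finite_suppress_V (hG : G.IsPMulTree) : Finite G.suppress.V := by
  haveI := hG.finV
  exact inferInstanceAs (Finite {v : G.V // G.Keep v})

lemma suppArc_endV_inj (hG : G.IsPMulTree) :
    Function.Injective (fun l : G.suppress.A => G.endV l.1) := by
  intro l m h
  exact Subtype.ext (pre_unique hG l.1.length l.1 m.1 le_rfl
    (pre_of_suppArc l.2) (pre_of_suppArc m.2) h)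

lemma finite_suppress_A (hG : G.IsPMulTree) : Finite G.suppress.A := by
  haveI := hG.finV
  exact Finite.of_injective _ (suppArc_endV_inj hG)

lemma suppress_indeg_root (hG : G.IsPMulTree) :
    G.suppress.indeg G.suppress.root = 0 := by
  haveI : IsEmpty {l : G.suppress.A // G.suppress.hd l = G.suppress.root} := by
    constructor
    rintro ⟨l, hl⟩
    have h1 : G.endV l.1 = G.root := congrArg Subtype.val hl
    obtain ⟨p, a, hpa⟩ := l.1.eq_nil_or_concat'.resolve_left l.2.1
    rw [hpa, endV_concat] at h1
    exact no_arc_into_root hG a h1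
  rw [indeg]
  exact Nat.card_of_isEmpty

lemma suppress_indeg_one (hG : G.IsPMulTree) {v : G.V} (hv : G.Keep v) (hvr : v ≠ G.root) :
    G.suppress.indeg ⟨v, hv⟩ = 1 := by
  obtain ⟨l₀, hpre, hend⟩ := exists_pre_into hG v hvr
  have hsupp : G.IsSuppArc l₀ := isSuppArc_iff.mpr ⟨hpre, hend ▸ hv⟩
  unfold indeg
  rw [Nat.card_eq_one_iff_unique]
  constructor
  · constructor
    rintro ⟨l, hl⟩ ⟨m, hm⟩
    have h1 : G.endV l.1 = G.endV m.1 :=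
      (congrArg Subtype.val hl).trans (congrArg Subtype.val hm).symm
    exact Subtype.ext (suppArc_endV_inj hG h1)
  · exact ⟨⟨⟨l₀, hsupp⟩, Subtype.ext hend⟩⟩

lemma suppress_outdeg_zero (hG : G.IsPMulTree) {v : G.V} (hv : G.Keep v)
    (h0 : G.outdeg v = 0) : G.suppress.outdeg ⟨v, hv⟩ = 0 := by
  haveI := hG.finA
  haveI : IsEmpty {l : G.suppress.A // G.suppress.tl l = ⟨v, hv⟩} := by
    constructor
    rintro ⟨l, hl⟩
    have h1 : G.startV l.1 = v := congrArg Subtype.val hl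
    cases hla : l.1 with
    | nil => exact l.2.1 hla
    | cons a t =>
      rw [hla, startV_cons] at h1
      exact no_arc_out hG.finA h0 a h1
  unfold outdeg
  exact Nat.card_of_isEmpty

lemma suppress_outdeg_pos (hG : G.IsPMulTree) {v : G.V} (hv : G.Keep v)
    (h0 : G.outdeg v ≠ 0) : G.suppress.outdeg ⟨v, hv⟩ ≠ 0 := by
  haveI := hG.finA
  haveI : Finite G.suppress.A := finite_suppress_A hG
  have hne : Nonempty {a : G.A // G.tl a = v} := by
    by_contra h
    haveI := not_nonempty_iff.mp h
    exact h0 (by rw [outdeg]; exact Nat.card_of_isEmpty)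
  obtain ⟨a, ha⟩ := hne
  obtain ⟨l, hl, hhead⟩ := exists_supp_from hG a (ha ▸ hv)
  haveI : Nonempty {l' : G.suppress.A // G.suppress.tl l' = ⟨v, hv⟩} :=
    ⟨⟨⟨l, hl⟩, Subtype.ext (by show G.startV l = v; rw [startV_eq_of_head? hhead, ha])⟩⟩
  have h1 : 0 < G.suppress.outdeg ⟨v, hv⟩ := Nat.card_pos
  omega

lemma suppress_outdeg_two (hG : G.IsPMulTree) {v : G.V} (hv : G.Keep v)
    (h2 : 2 ≤ G.outdeg v) : 2 ≤ G.suppress.outdeg ⟨v, hv⟩ := by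
  haveI := hG.finA
  haveI : Finite G.suppress.A := finite_suppress_A hG
  have hnt : Nontrivial {a : G.A // G.tl a = v} :=
    Finite.one_lt_card_iff_nontrivial.mp h2
  obtain ⟨⟨a, ha⟩, ⟨b, hb⟩, hab⟩ := hnt
  obtain ⟨la, hla, hha⟩ := exists_supp_from hG a (ha ▸ hv)
  obtain ⟨lb, hlb, hhb⟩ := exists_supp_from hG b (hb ▸ hv)
  have hnt2 : Nontrivial {l : G.suppress.A // G.suppress.tl l = ⟨v, hv⟩} := by
    refine ⟨⟨⟨la, hla⟩, Subtype.ext (by show G.startV la = v; rw [startV_eq_of_head? hha, ha])⟩,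
            ⟨⟨lb, hlb⟩, Subtype.ext (by show G.startV lb = v; rw [startV_eq_of_head? hhb, hb])⟩, ?_⟩
    intro h
    apply hab
    have heq : la = lb := congrArg (fun z => z.1.1) h
    rw [heq, hhb] at hha
    exact Subtype.ext (Option.some.inj hha).symm
  exact Finite.one_lt_card_iff_nontrivial.mpr hnt2

lemma suppress_acyclic (hG : G.IsPMulTree) : G.suppress.Acyclic := by
  intro v hv
  have hstep : ∀ x y : G.suppress.V, G.suppress.arcRel x y →
      Relation.TransGen G.arcRel x.1 y.1 := by
    rintro x y ⟨l, hx, hy⟩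
    have hx1 : G.startV l.1 = x.1 := congrArg Subtype.val hx
    have hy1 : G.endV l.1 = y.1 := congrArg Subtype.val hy
    rw [← hx1, ← hy1]
    exact l.2.2.1.transGen_startV_endV l.2.1
  have := Relation.TransGen.lift' (fun x : G.suppress.V => x.1) hstep v v hv
  exact hG.acyclic v.1 this

lemma suppress_reaches (hG : G.IsPMulTree) :
    ∀ v, G.suppress.Reaches G.suppress.root v := by
  have wf := acyclic_wf hG.finV hG.acyclic
  suffices h : ∀ w, ∀ hw : G.Keep w, G.suppress.Reaches G.suppress.root ⟨w, hw⟩ by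
    rintro ⟨w, hw⟩
    exact h w hw
  intro w
  induction w using wf.induction with
  | _ w ih =>
    intro hw
    by_cases hroot : w = G.root
    · subst hroot
      exact Relation.ReflTransGen.refl
    · obtain ⟨l, hpre, hend⟩ := exists_pre_into hG w hroot
      have hsupp : G.IsSuppArc l := isSuppArc_iff.mpr ⟨hpre, hend ▸ hw⟩
      have hkeep : G.Keep (G.startV l) := hpre.2.2.1
      have htg : Relation.TransGen G.arcRel (G.startV l) w :=
        hend ▸ hpre.2.1.transGen_startV_endV hpre.1
      have hreach := ih (G.startV l) htg hkeep
      exact hreach.tail ⟨⟨l, hsupp⟩, rfl, Subtype.ext hend⟩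

lemma suppress_isMulTree (hG : G.IsPMulTree) : G.suppress.IsMulTree := by
  haveI := hG.finV
  haveI := hG.finA
  have finV : Finite G.suppress.V := finite_suppress_V hG
  have finA : Finite G.suppress.A := finite_suppress_A hG
  have hout0 : ∀ (v : G.V) (hv : G.Keep v),
      (G.suppress.outdeg ⟨v, hv⟩ = 0 ↔ G.outdeg v = 0) := by
    intro v hv
    constructor
    · intro h
      by_contra h0
      exact suppress_outdeg_pos hG hv h0 h
    · exact suppress_outdeg_zero hG hv
  refine ⟨⟨⟨finV, finA, suppress_acyclic hG, suppress_indeg_root hG, suppress_reaches hG⟩,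
    ?_, ?_, ?_⟩, ?_⟩
  · rintro ⟨v, hv⟩ hne
    exact suppress_indeg_one hG hv (fun h => hne (Subtype.ext h))
  · rintro ⟨v, hv⟩
    have hlabeq : G.suppress.lab ⟨v, hv⟩ = G.lab v := rfl
    rw [hlabeq]
    unfold IsLeaf
    rw [hout0 v hv]
    exact (hG.labiff v).trans (by rw [IsLeaf])
  · intro x
    obtain ⟨v, hvlab⟩ := hG.labsurj x
    have hleaf : G.IsLeaf v := (hG.labiff v).mp ⟨x, hvlab⟩
    rw [IsLeaf] at hleaf
    have hv : G.Keep v := Or.inr (fun h => by omega)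
    exact ⟨⟨v, hv⟩, hvlab⟩
  · rintro ⟨v, hv⟩ ⟨hin, hout⟩
    by_cases hroot : v = G.root
    · subst hroot
      have heq : (⟨G.root, hv⟩ : G.suppress.V) = G.suppress.root := rfl
      rw [heq, suppress_indeg_root hG] at hin
      omega
    · rcases hv with h | h
      · exact hroot h
      · have hind : G.indeg v = 1 := hG.deg1 v hroot
        have hne1 : G.outdeg v ≠ 1 := fun h1 => h ⟨hind, h1⟩
        rcases Nat.lt_or_ge (G.outdeg v) 2 with hlt | hge
        · have h0 : G.outdeg v = 0 := by omega
          have := (hout0 v (Or.inr h)).mpr h0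
          rw [this] at hout
          omega
        · have := suppress_outdeg_two hG (Or.inr h) hge
          rw [hout] at this
          omega

end Suppress

section UstarSec

/-- The arc list of a root-path. -/
def RPath.toList : {v : G.V} → RPath G v → List G.A
  | _, .nil => []
  | _, .cons p a _ => p.toList ++ [a]

lemma RPath.endV_toList : ∀ {v : G.V} (p : RPath G v), G.endV p.toList = v
  | _, .nil => rfl
  | _, .cons p a h => by rw [RPath.toList, endV_concat]

lemma RPath.chain_toList : ∀ {v : G.V} (p : RPath G v), G.IsChain p.toList
  | _, .nil => isChain_nil
  | _, .cons p a h =>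
    (RPath.chain_toList p).append (isChain_singleton a)
      (by rw [RPath.endV_toList, startV_singleton, h])

lemma toList_inj {v : G.V} (p : RPath G v) : ∀ {w : G.V} (q : RPath G w),
    p.toList = q.toList → (⟨v, p⟩ : Σ u, RPath G u) = ⟨w, q⟩ := by
  induction p with
  | nil =>
    intro w q h
    cases q with
    | nil => rfl
    | cons q' b hb => simp [RPath.toList] at h
  | cons p' a ha ih =>
    intro w q h
    cases q with
    | nil => simp [RPath.toList] at h
    | cons q' b hb =>
      simp only [RPath.toList] at h
      obtain ⟨h1, h2⟩ := List.append_inj' h rfl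
      obtain rfl : a = b := by simpa using h2
      have hs := ih q' h1
      have hu := congrArg Sigma.fst hs
      dsimp at hu
      subst hu
      have hpq : p' = q' := by simpa using hs
      subst hpq
      rfl

lemma ustarA_ext {x y : G.Ustar.A}
    (h1 : (⟨x.1, x.2.1⟩ : Σ v, RPath G v) = ⟨y.1, y.2.1⟩) (h2 : x.2.2.1 = y.2.2.1) :
    x = y := by
  obtain ⟨v, p, a, ha⟩ := x
  obtain ⟨w, q, b, hb⟩ := y
  dsimp at h1 h2
  have hv : v = w := congrArg Sigma.fst h1
  subst hv
  have hp : p = q := by simpa using h1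
  subst hp
  subst h2
  rfl

lemma ustar_hd_toList (x : G.Ustar.A) :
    (G.Ustar.hd x).2.toList = x.2.1.toList ++ [x.2.2.1] := rfl

lemma ustar_hd_inj {x y : G.Ustar.A} (h : G.Ustar.hd x = G.Ustar.hd y) : x = y := by
  have ht := congrArg (fun z : G.Ustar.V => z.2.toList) h
  rw [ustar_hd_toList, ustar_hd_toList] at ht
  obtain ⟨h1, h2⟩ := List.append_inj' ht rfl
  exact ustarA_ext (toList_inj _ _ h1) (by simpa using h2)

lemma ustar_outdeg (v : G.V) (q : RPath G v) :
    G.Ustar.outdeg ⟨v, q⟩ = G.outdeg v := by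
  refine Nat.card_eq_of_bijective
    (fun x => ⟨x.1.2.2.1, x.1.2.2.2.trans (congrArg Sigma.fst x.2)⟩) ⟨?_, ?_⟩
  · intro x y hxy
    exact Subtype.ext (ustarA_ext (x.2.trans y.2.symm) (congrArg Subtype.val hxy))
  · rintro ⟨a, ha⟩
    exact ⟨⟨⟨v, q, a, ha⟩, rfl⟩, rfl⟩

lemma ustar_indeg_root : G.Ustar.indeg G.Ustar.root = 0 := by
  haveI : IsEmpty {x : G.Ustar.A // G.Ustar.hd x = G.Ustar.root} := by
    constructor
    rintro ⟨x, hx⟩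
    have ht := congrArg (fun z : G.Ustar.V => z.2.toList) hx
    rw [ustar_hd_toList] at ht
    simp [RPath.toList, Ustar] at ht
  rw [indeg]
  exact Nat.card_of_isEmpty

lemma ustar_indeg_one (w : G.Ustar.V) (hw : w ≠ G.Ustar.root) :
    G.Ustar.indeg w = 1 := by
  obtain ⟨v, q⟩ := w
  cases q with
  | nil => exact absurd rfl hw
  | cons p a ha =>
    unfold indeg
    rw [Nat.card_eq_one_iff_unique]
    refine ⟨⟨?_⟩, ⟨⟨⟨_, p, a, ha⟩, rfl⟩⟩⟩
    rintro ⟨x, hx⟩ ⟨y, hy⟩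
    exact Subtype.ext (ustar_hd_inj (hx.trans hy.symm))

lemma ustar_acyclic : G.Ustar.Acyclic := by
  intro v hv
  have hmono : ∀ x y : G.Ustar.V, G.Ustar.arcRel x y →
      x.2.toList.length < y.2.toList.length := by
    rintro x y ⟨z, hzx, hzy⟩
    subst hzx
    subst hzy
    have h1 : (G.Ustar.tl z).2.toList = z.2.1.toList := rfl
    rw [h1, ustar_hd_toList]
    simp
  have hlt : ∀ x y, Relation.TransGen G.Ustar.arcRel x y →
      x.2.toList.length < y.2.toList.length := by
    intro x y h
    induction h with
    | single h => exact hmono _ _ h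
    | tail h hstep ih => exact ih.trans (hmono _ _ hstep)
  exact absurd (hlt v v hv) (lt_irrefl _)

lemma ustar_reaches : ∀ w : G.Ustar.V, G.Ustar.Reaches G.Ustar.root w := by
  rintro ⟨v, q⟩
  induction q with
  | nil => exact Relation.ReflTransGen.refl
  | cons p a ha ih => exact ih.tail ⟨⟨_, p, a, ha⟩, rfl, rfl⟩

lemma ustar_finV (hA : Finite G.A) (hAc : G.Acyclic) : Finite G.Ustar.V := by
  classical
  haveI := hA
  haveI : Fintype G.A := Fintype.ofFinite _
  exact Finite.of_injective
    (fun x : G.Ustar.V => (⟨x.2.toList, (RPath.chain_toList x.2).nodup hAc⟩ :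
      {l : List G.A // l.Nodup}))
    (fun x y h => toList_inj _ _ (congrArg Subtype.val h))

lemma ustar_finA (hA : Finite G.A) (hAc : G.Acyclic) : Finite G.Ustar.A := by
  haveI : Finite (Σ v : G.V, RPath G v) := ustar_finV hA hAc
  haveI := hA
  exact Finite.of_injective
    (fun x : G.Ustar.A => ((⟨x.1, x.2.1⟩ : G.Ustar.V), x.2.2.1))
    (fun x y h => ustarA_ext (congrArg Prod.fst h) (congrArg Prod.snd h))

lemma exists_rpath (v : G.V) (h : G.Reaches G.root v) : Nonempty (RPath G v) := by
  induction h with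
  | refl => exact ⟨.nil⟩
  | tail h₁ h₂ ih =>
    obtain ⟨p⟩ := ih
    obtain ⟨a, ha, rfl⟩ := h₂
    exact ⟨.cons p a ha⟩

lemma ustar_isPMulTree {N : Dgr X} (hN : N.IsPhyloNetwork) : N.Ustar.IsPMulTree := by
  obtain ⟨⟨⟨hfV, hfA, hacy, hr0, hreach⟩, hout2, hvert, hlabiff, hlabex⟩, hnm⟩ := hN
  refine ⟨⟨ustar_finV hfA hacy, ustar_finA hfA hacy, ustar_acyclic, ustar_indeg_root,
    ustar_reaches⟩, fun w hw => ustar_indeg_one w hw, ?_, ?_⟩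
  · rintro ⟨v, q⟩
    have hlabeq : N.Ustar.lab ⟨v, q⟩ = N.lab v := rfl
    rw [hlabeq]
    unfold IsLeaf
    rw [ustar_outdeg]
    exact (hlabiff v).trans (by rw [IsLeaf])
  · intro x
    obtain ⟨v, hv, -⟩ := hlabex x
    obtain ⟨p⟩ := exists_rpath v (hreach v)
    exact ⟨⟨v, p⟩, hv⟩

end UstarSec

end Dgr

/-- For any phylogenetic network `N` on `X`, the unfolding
`U(N)`, obtained from the path-tree `U*(N)` by suppressing all in-degree-one
out-degree-one vertices, is a MUL-tree on `X`. -/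
theorem unfolding_is_MulTree (X : Type) (N : Dgr X) (hN : N.IsPhyloNetwork) :
    N.U.IsMulTree := by
  exact Dgr.suppress_isMulTree (Dgr.ustar_isPMulTree hN)
end

section
/- Let N be a semi-resolved phylogenetic network that is compressed and such that no two distinct tree vertices v, w of N satisfy ch(v) = ch(w). Then N is irreducible, i.e., N contains no identifiable pair of tree vertices. -/
/-! ### Auxiliary lemmas for Statement 4 -/

namespace Dgr

variable {X : Type}

section Transport

variable {G H : Dgr X} (φ : G.V ≃ H.V) (ψ : G.A ≃ H.A)

lemma reaches_map (htl : ∀ a, H.tl (ψ a) = φ (G.tl a))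
    (hhd : ∀ a, H.hd (ψ a) = φ (G.hd a)) {x y : G.V} (hxy : G.Reaches x y) :
    H.Reaches (φ x) (φ y) := by
  induction hxy with
  | refl => exact Relation.ReflTransGen.refl
  | tail _ hab ih =>
      obtain ⟨a, h1, h2⟩ := hab
      exact ih.tail ⟨ψ a, by rw [htl, h1], by rw [hhd, h2]⟩

lemma tl_symm (htl : ∀ a, H.tl (ψ a) = φ (G.tl a)) :
    ∀ a, G.tl (ψ.symm a) = φ.symm (H.tl a) := by
  intro a
  apply φ.injective
  rw [← htl, Equiv.apply_symm_apply, Equiv.apply_symm_apply]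

lemma hd_symm (hhd : ∀ a, H.hd (ψ a) = φ (G.hd a)) :
    ∀ a, G.hd (ψ.symm a) = φ.symm (H.hd a) := by
  intro a
  apply φ.injective
  rw [← hhd, Equiv.apply_symm_apply, Equiv.apply_symm_apply]

lemma reaches_iff (htl : ∀ a, H.tl (ψ a) = φ (G.tl a))
    (hhd : ∀ a, H.hd (ψ a) = φ (G.hd a)) (x y : G.V) :
    G.Reaches x y ↔ H.Reaches (φ x) (φ y) := by
  constructor
  · exact reaches_map φ ψ htl hhd
  · intro hr
    have := reaches_map φ.symm ψ.symm (tl_symm φ ψ htl) (hd_symm φ ψ hhd) hr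
    rwa [Equiv.symm_apply_apply, Equiv.symm_apply_apply] at this

lemma iso_pendant (htl : ∀ a, H.tl (ψ a) = φ (G.tl a))
    (hhd : ∀ a, H.hd (ψ a) = φ (G.hd a)) (hlab : ∀ v, H.lab (φ v) = G.lab v)
    (z : G.V) : Iso (G.pendant z) (H.pendant (φ z)) := by
  refine ⟨Equiv.subtypeEquiv φ (fun w => reaches_iff φ ψ htl hhd z w),
          Equiv.subtypeEquiv ψ (fun a => by
            rw [htl a]; exact reaches_iff φ ψ htl hhd z (G.tl a)),
          fun a => Subtype.ext (htl a.1), fun a => Subtype.ext (hhd a.1),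
          Subtype.ext rfl, fun w => hlab w.1⟩

end Transport

lemma isoSymm {G H : Dgr X} (h : Iso G H) : Iso H G := by
  obtain ⟨φ, ψ, htl, hhd, hroot, hlab⟩ := h
  refine ⟨φ.symm, ψ.symm, tl_symm φ ψ htl, hd_symm φ ψ hhd, ?_, ?_⟩
  · rw [← hroot, Equiv.symm_apply_apply]
  · intro v
    have := hlab (φ.symm v)
    rw [Equiv.apply_symm_apply] at this
    exact this.symm

lemma isoTrans {G H K : Dgr X} (h1 : Iso G H) (h2 : Iso H K) : Iso G K := by
  obtain ⟨φ1, ψ1, htl1, hhd1, hroot1, hlab1⟩ := h1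
  obtain ⟨φ2, ψ2, htl2, hhd2, hroot2, hlab2⟩ := h2
  refine ⟨φ1.trans φ2, ψ1.trans ψ2, ?_, ?_, ?_, ?_⟩
  · intro a; simp only [Equiv.trans_apply]; rw [htl2, htl1]
  · intro a; simp only [Equiv.trans_apply]; rw [hhd2, hhd1]
  · simp only [Equiv.trans_apply]; rw [hroot1, hroot2]
  · intro v; simp only [Equiv.trans_apply]; rw [hlab2, hlab1]

lemma pendant_reaches (G : Dgr X) (u : G.V) (z w : (G.pendant u).V) :
    (G.pendant u).Reaches z w ↔ G.Reaches z.1 w.1 := by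
  constructor
  · intro h
    induction h with
    | refl => exact Relation.ReflTransGen.refl
    | tail _ hab ih =>
        obtain ⟨a, h1, h2⟩ := hab
        exact ih.tail ⟨a.1, congrArg Subtype.val h1, congrArg Subtype.val h2⟩
  · intro h
    have key : ∀ w0, G.Reaches z.1 w0 → ∀ (pf : G.Reaches u w0),
        (G.pendant u).Reaches z ⟨w0, pf⟩ := by
      intro w0 hw
      induction hw with
      | refl => intro pf; exact Relation.ReflTransGen.refl
      | tail hb hab ih =>
          intro pf
          obtain ⟨a, h1, h2⟩ := hab
          refine (ih (z.2.trans hb)).tail ?_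
          exact ⟨⟨a, by rw [h1]; exact z.2.trans hb⟩, Subtype.ext h1, Subtype.ext h2⟩
    exact key w.1 h w.2

lemma pendant_pendant (G : Dgr X) (u : G.V) (z : (G.pendant u).V) :
    Iso ((G.pendant u).pendant z) (G.pendant z.1) := by
  refine ⟨⟨fun w => ⟨w.1.1, (pendant_reaches G u z w.1).mp w.2⟩,
           fun w => ⟨⟨w.1, z.2.trans w.2⟩,
             (pendant_reaches G u z ⟨w.1, z.2.trans w.2⟩).mpr w.2⟩,
           fun _ => rfl, fun _ => rfl⟩,
          ⟨fun a => ⟨a.1.1, (pendant_reaches G u z ((G.pendant u).tl a.1)).mp a.2⟩,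
           fun a => ⟨⟨a.1, z.2.trans a.2⟩,
             (pendant_reaches G u z ((G.pendant u).tl ⟨a.1, z.2.trans a.2⟩)).mpr a.2⟩,
           fun _ => rfl, fun _ => rfl⟩,
          fun _ => rfl, fun _ => rfl, rfl, fun _ => rfl⟩

lemma iso_arc {G : Dgr X} {p q : G.V}
    (hiso : Iso (G.pendant p) (G.pendant q)) {e : G.A} (he : G.tl e = p) :
    ∃ e' : G.A, G.tl e' = q ∧ Iso (G.pendant (G.hd e)) (G.pendant (G.hd e')) := by
  obtain ⟨φ, ψ, htl, hhd, hroot, hlab⟩ := hiso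
  have hre : G.Reaches p (G.tl e) := by
    rw [he]
    exact Relation.ReflTransGen.refl
  have hεtl : (G.pendant p).tl ⟨e, hre⟩ = (G.pendant p).root := Subtype.ext he
  refine ⟨(ψ ⟨e, hre⟩).1, ?_, ?_⟩
  · have h1 : (G.pendant q).tl (ψ ⟨e, hre⟩) = (G.pendant q).root := by
      rw [htl ⟨e, hre⟩, hεtl, hroot]
    exact congrArg Subtype.val h1
  · have main := iso_pendant φ ψ htl hhd hlab ((G.pendant p).hd ⟨e, hre⟩)
    rw [← hhd ⟨e, hre⟩] at main
    exact isoTrans (isoTrans (isoSymm (pendant_pendant G p ((G.pendant p).hd ⟨e, hre⟩))) main)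
      (pendant_pendant G q ((G.pendant q).hd (ψ ⟨e, hre⟩)))

/-! ### Path-tree combinatorics -/

def pred (G : Dgr X) : G.Ustar.V → Option G.Ustar.A
  | ⟨_, RPath.nil⟩ => none
  | ⟨_, RPath.cons (v := v) π a h⟩ => some ⟨v, π, a, h⟩

lemma hd_eq_iff (G : Dgr X) (x : G.Ustar.A) (t : G.Ustar.V) :
    G.Ustar.hd x = t ↔ G.pred t = some x := by
  constructor
  · rintro rfl
    obtain ⟨v, π, a, h⟩ := x
    rfl
  · intro h
    obtain ⟨w, ρ⟩ := t
    cases ρ with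
    | nil => simp [pred] at h
    | cons π a h' =>
        simp only [pred, Option.some.injEq] at h
        obtain rfl := Option.some_injective _ h
        rfl

lemma indeg_hd (G : Dgr X) (x : G.Ustar.A) : G.Ustar.indeg (G.Ustar.hd x) = 1 := by
  refine Nat.card_eq_one_iff_unique.mpr ⟨⟨fun y z => ?_⟩, ⟨⟨x, rfl⟩⟩⟩
  apply Subtype.ext
  have hy := (hd_eq_iff G y.1 _).mp y.2
  have hz := (hd_eq_iff G z.1 _).mp z.2
  exact Option.some_injective _ (hy.symm.trans hz)

def outEquiv (G : Dgr X) (s : G.Ustar.V) :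
    {x : G.Ustar.A // G.Ustar.tl x = s} ≃ {a : G.A // G.tl a = s.1} where
  toFun x := ⟨x.1.2.2.1, x.1.2.2.2.trans (congrArg Sigma.fst x.2)⟩
  invFun a := ⟨⟨s.1, s.2, a.1, a.2⟩, rfl⟩
  left_inv := by rintro ⟨⟨v, π, a, ha⟩, rfl⟩; rfl
  right_inv := by rintro ⟨a, ha⟩; rfl

lemma outdeg_ustar (G : Dgr X) (s : G.Ustar.V) :
    G.Ustar.outdeg s = G.outdeg s.1 := Nat.card_congr (outEquiv G s)

lemma keep_of_ne_one (G : Dgr X) (t : G.Ustar.V) (h : G.outdeg t.1 ≠ 1) :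
    G.Ustar.Keep t :=
  Or.inr (fun hk => h (by rw [← outdeg_ustar]; exact hk.2))

lemma not_keep_hd (G : Dgr X) (x : G.Ustar.A)
    (h : G.outdeg (G.Ustar.hd x).1 = 1) : ¬ G.Ustar.Keep (G.Ustar.hd x) := by
  rintro (hroot | hnk)
  · have h1 := (hd_eq_iff G x _).mp rfl
    rw [hroot] at h1
    exact Option.some_ne_none x (h1 : (none : Option G.Ustar.A) = some x).symm
  · exact hnk ⟨indeg_hd G x, by rw [outdeg_ustar]; exact h⟩

/-! ### Suppression arcs -/

lemma startV_cons_s4 (G : Dgr X) (x : G.A) (l : List G.A) :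
    G.startV (x :: l) = G.tl x := rfl

lemma endV_singleton_s4 (G : Dgr X) (x : G.A) : G.endV [x] = G.hd x := rfl

lemma endV_pair (G : Dgr X) (x y : G.A) : G.endV [x, y] = G.hd y := rfl

lemma isChain_singleton_s4 (G : Dgr X) (x : G.A) : G.IsChain [x] := by
  intro p a b s h
  exfalso
  have := congrArg List.length h
  simp [List.length_append] at this
  omega

lemma isChain_pair (G : Dgr X) (x y : G.A) (hxy : G.hd x = G.tl y) :
    G.IsChain [x, y] := by
  intro p a b s h
  rcases p with _ | ⟨c, _ | ⟨d, p⟩⟩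
  · injection h with h1 h2
    injection h2 with h2 h3
    subst h1; subst h2
    exact hxy
  · exfalso
    injection h with h1 h2
    injection h2 with h2 h3
    exact List.cons_ne_nil b s h3.symm
  · exfalso
    injection h with h1 h2
    injection h2 with h2 h3
    have := congrArg List.length h3
    simp [List.length_append] at this

lemma noMid_singleton (G : Dgr X) (x : G.A) :
    ∀ p a s, [x] = p ++ a :: s → s ≠ [] → ¬ G.Keep (G.hd a) := by
  intro p a s h hs
  exfalso
  have := congrArg List.length h
  simp [List.length_append] at this
  rcases s with _ | ⟨y, s⟩
  · exact hs rfl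
  · simp at this
    omega

lemma noMid_pair (G : Dgr X) (x y : G.A) (hx : ¬ G.Keep (G.hd x)) :
    ∀ p a s, [x, y] = p ++ a :: s → s ≠ [] → ¬ G.Keep (G.hd a) := by
  intro p a s h hs
  rcases p with _ | ⟨c, _ | ⟨d, p⟩⟩
  · injection h with h1 h2
    subst h1
    exact hx
  · injection h with h1 h2
    injection h2 with h2 h3
    subst h2
    exact absurd h3.symm hs
  · exfalso
    injection h with h1 h2
    injection h2 with h2 h3
    have := congrArg List.length h3
    simp [List.length_append] at this

lemma isSuppArc_singleton (G : Dgr X) (x : G.A) (h1 : G.Keep (G.tl x))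
    (h2 : G.Keep (G.hd x)) : G.IsSuppArc [x] :=
  ⟨by simp, isChain_singleton_s4 G x, h1, h2, noMid_singleton G x⟩

lemma isSuppArc_pair (G : Dgr X) (x y : G.A) (h0 : G.hd x = G.tl y)
    (h1 : G.Keep (G.tl x)) (h2 : G.Keep (G.hd y)) (h3 : ¬ G.Keep (G.hd x)) :
    G.IsSuppArc [x, y] :=
  ⟨by simp, isChain_pair G x y h0, h1, h2, noMid_pair G x y h3⟩

/-! ### Network-specific lemmas -/

def Link (N : Dgr X) (a : N.A) (t : N.V) : Prop :=
  N.hd a = t ∨ (N.IsRetVertex (N.hd a) ∧ ∃ b, N.tl b = N.hd a ∧ N.hd b = t)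

lemma link_below {N : Dgr X} {a : N.A} {t : N.V} (hL : N.Link a t) :
    Relation.TransGen N.arcRel (N.tl a) t := by
  rcases hL with rfl | ⟨_, b, hb1, hb2⟩
  · exact Relation.TransGen.single ⟨a, rfl, rfl⟩
  · exact Relation.TransGen.tail (Relation.TransGen.single ⟨a, rfl, rfl⟩) ⟨b, hb1, hb2⟩

lemma arc_into_unique_s4 (N : Dgr X) {t : N.V} (ht : N.indeg t = 1) {a b : N.A}
    (ha : N.hd a = t) (hb : N.hd b = t) : a = b := by
  haveI := (Nat.card_eq_one_iff_unique.mp ht).1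
  exact congrArg Subtype.val
    (Subsingleton.elim (⟨a, ha⟩ : {x : N.A // N.hd x = t}) ⟨b, hb⟩)

lemma combine (N : Dgr X) {a a' : N.A} {t : N.V} (hL : N.Link a t)
    (hL' : N.Link a' t) (htv : N.IsTreeVertex (N.tl a))
    (htw : N.IsTreeVertex (N.tl a')) (htt : N.IsTreeVertex t) :
    N.tl a = N.tl a' ∨ N.hd a = N.hd a' := by
  have ht1 : N.indeg t = 1 := htt.1
  rcases hL with h1 | ⟨hr, b, hb1, hb2⟩ <;> rcases hL' with h1' | ⟨hr', b', hb1', hb2'⟩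
  · left; rw [arc_into_unique_s4 N ht1 h1 h1']
  · exfalso
    have hab : a = b' := arc_into_unique_s4 N ht1 h1 hb2'
    have hret : N.IsRetVertex (N.tl a) := by rw [hab, hb1']; exact hr'
    have := htv.1
    have := hret.2
    omega
  · exfalso
    have hab : a' = b := arc_into_unique_s4 N ht1 h1' hb2
    have hret : N.IsRetVertex (N.tl a') := by rw [hab, hb1]; exact hr
    have := htw.1
    have := hret.2
    omega
  · right
    have hbb : b = b' := arc_into_unique_s4 N ht1 hb2 hb2'
    rw [← hb1, ← hb1', hbb]

lemma card_zero_isEmpty {α : Type} [Finite α] (h : Nat.card α = 0) : IsEmpty α := by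
  rcases Nat.card_eq_zero.mp h with h1 | h1
  · exact h1
  · exact absurd ‹Finite α› (not_finite_iff_infinite.mpr h1)

lemma head_tree_or_ret {N : Dgr X} (hN : N.IsXNetwork) (a : N.A) :
    N.IsTreeVertex (N.hd a) ∨ N.IsRetVertex (N.hd a) := by
  haveI : Finite N.A := hN.1.2.1
  apply hN.2.2.1
  intro hr
  have h0 : N.indeg N.root = 0 := hN.1.2.2.2.1
  exact (card_zero_isEmpty h0).false ⟨a, hr⟩

lemma tree_outdeg_ne_one {N : Dgr X} {v : N.V} (h : N.IsTreeVertex v) :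
    N.outdeg v ≠ 1 := by
  rcases h.2 with h | h <;> omega

lemma exists_mkE (N : Dgr X) (hN : N.IsXNetwork) (hc : N.Compressed)
    (p : N.U.V) (a : N.A) (ha : N.tl a = p.1.1) :
    ∃ (e : N.U.A) (t : N.V), N.U.tl e = p ∧ (N.U.hd e).1.1 = t ∧
      N.Link a t ∧ N.IsTreeVertex t := by
  haveI : Finite N.A := hN.1.2.1
  have hxtl : N.Ustar.tl ⟨p.1.1, p.1.2, a, ha⟩ = p.1 := rfl
  have hkstart : N.Ustar.Keep (N.Ustar.tl ⟨p.1.1, p.1.2, a, ha⟩) := by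
    rw [hxtl]; exact p.2
  rcases head_tree_or_ret hN a with ht | hr
  · refine ⟨⟨[⟨p.1.1, p.1.2, a, ha⟩], ?_⟩, N.hd a, ?_, ?_, Or.inl rfl, ht⟩
    · exact isSuppArc_singleton _ _ hkstart
        (keep_of_ne_one N (N.Ustar.hd ⟨p.1.1, p.1.2, a, ha⟩) (tree_outdeg_ne_one ht))
    · exact Subtype.ext hxtl
    · rfl
  · have hout1 : N.outdeg (N.hd a) = 1 := hr.1
    obtain ⟨⟨b, hb⟩⟩ := (Nat.card_eq_one_iff_unique.mp hout1).2
    have htb : N.IsTreeVertex (N.hd b) := hc b (by rw [hb]; exact hr)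
    refine ⟨⟨[⟨p.1.1, p.1.2, a, ha⟩, ⟨N.hd a, RPath.cons p.1.2 a ha, b, hb⟩], ?_⟩,
      N.hd b, ?_, ?_, Or.inr ⟨hr, b, hb, rfl⟩, htb⟩
    · refine isSuppArc_pair _ _ _ rfl hkstart ?_ ?_
      · exact keep_of_ne_one N _ (tree_outdeg_ne_one htb)
      · exact not_keep_hd N _ hout1
    · exact Subtype.ext hxtl
    · rfl

lemma suppArc_shape {G : Dgr X} {l : List G.A} (hl : G.IsSuppArc l) :
    ∃ x l', l = x :: l' := by
  rcases l with _ | ⟨x, l'⟩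
  · exact absurd rfl hl.1
  · exact ⟨x, l', rfl⟩

lemma classify (N : Dgr X) (hN : N.IsXNetwork) (hc : N.Compressed) (e : N.U.A) :
    ∃ (a : N.A) (t : N.V), N.tl a = (N.U.tl e).1.1 ∧ (N.U.hd e).1.1 = t ∧
      N.Link a t ∧ N.IsTreeVertex t := by
  haveI : Finite N.A := hN.1.2.1
  obtain ⟨l, hl⟩ := e
  obtain ⟨x, l', rfl⟩ := suppArc_shape hl
  have htlv : N.tl x.2.2.1 = (N.U.tl ⟨x :: l', hl⟩).1.1 := x.2.2.2
  rcases head_tree_or_ret hN x.2.2.1 with ht | hr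
  · have hl' : l' = [] := by
      cases l' with
      | nil => rfl
      | cons y l'' =>
          exact absurd (keep_of_ne_one N (N.Ustar.hd x) (tree_outdeg_ne_one ht))
            (hl.2.2.2.2 [] x (y :: l'') rfl (by simp))
    subst hl'
    exact ⟨x.2.2.1, N.hd x.2.2.1, htlv, rfl, Or.inl rfl, ht⟩
  · have hout1 : N.outdeg (N.hd x.2.2.1) = 1 := hr.1
    have hne : l' ≠ [] := by
      rintro rfl
      exact not_keep_hd N x hout1 hl.2.2.2.1
    obtain ⟨y, l'', rfl⟩ := List.exists_cons_of_ne_nil hne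
    have hchain : N.Ustar.hd x = N.Ustar.tl y := hl.2.1 [] x y l'' rfl
    have hbtl : N.tl y.2.2.1 = N.hd x.2.2.1 :=
      y.2.2.2.trans (congrArg Sigma.fst hchain.symm)
    have htb : N.IsTreeVertex (N.hd y.2.2.1) := hc _ (by rw [hbtl]; exact hr)
    have hl'' : l'' = [] := by
      cases l'' with
      | nil => rfl
      | cons z l3 =>
          exact absurd (keep_of_ne_one N (N.Ustar.hd y) (tree_outdeg_ne_one htb))
            (hl.2.2.2.2 [x] y (z :: l3) rfl (by simp))
    subst hl''
    exact ⟨x.2.2.1, N.hd y.2.2.1, htlv, rfl, Or.inr ⟨hr, y.2.2.1, hbtl, rfl⟩, htb⟩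

end Dgr

/-- A semi-resolved, compressed phylogenetic network in which
no two distinct tree vertices share the same set of children is irreducible. -/
theorem irreducible_of_no_equal_children (X : Type) (N : Dgr X)
    (hN : N.IsPhyloNetwork) (hsr : N.SemiResolved) (hc : N.Compressed)
    (h : ¬ ∃ v w : N.V, v ≠ w ∧ N.IsTreeVertex v ∧ N.IsTreeVertex w ∧
      N.children v = N.children w) :
    N.Irreducible := by
  obtain ⟨hXnet, hnm⟩ := hN
  haveI hFV : Finite N.V := hXnet.1.1
  haveI hFA : Finite N.A := hXnet.1.2.1
  haveI hirr : IsIrrefl N.V (fun t v => Relation.TransGen N.arcRel v t) :=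
    ⟨fun v hv => hXnet.1.2.2.1 v hv⟩
  haveI htrans : IsTrans N.V (fun t v => Relation.TransGen N.arcRel v t) :=
    ⟨fun _ _ _ h1 h2 => h2.trans h1⟩
  have wf := Finite.wellFounded_of_trans_of_irrefl
    (fun t v : N.V => Relation.TransGen N.arcRel v t)
  have main : ∀ v : N.V, ∀ p q : N.U.V, p.1.1 = v → N.IsTreeVertex v →
      N.IsTreeVertex q.1.1 → Dgr.Iso (N.U.pendant p) (N.U.pendant q) → v = q.1.1 := by
    refine fun v => wf.induction
      (C := fun v => ∀ p q : N.U.V, p.1.1 = v → N.IsTreeVertex v →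
        N.IsTreeVertex q.1.1 → Dgr.Iso (N.U.pendant p) (N.U.pendant q) → v = q.1.1)
      v ?_
    clear v
    intro v IH p q hpv htv htw hiso
    have hlabeq : N.lab q.1.1 = N.lab v := by
      obtain ⟨φ, ψ, htl, hhd, hroot, hlab⟩ := hiso
      have hz := hlab (N.U.pendant p).root
      rw [hroot] at hz
      rw [← hpv]
      exact hz
    rcases hv : N.lab v with _ | xx
    · -- internal case
      by_contra hvw
      apply h
      refine ⟨v, q.1.1, hvw, htv, htw, Set.Subset.antisymm ?_ ?_⟩
      · rintro c ⟨a, ha, rfl⟩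
        obtain ⟨e, t, hetl, hehd, hLink, htt⟩ :=
          Dgr.exists_mkE N hXnet hc p a (ha.trans hpv.symm)
        obtain ⟨e', he'tl, hiso'⟩ := Dgr.iso_arc hiso hetl
        obtain ⟨a', t', ha', hehd', hLink', htt'⟩ := Dgr.classify N hXnet hc e'
        rw [he'tl] at ha'
        have hbelow : Relation.TransGen N.arcRel v t := by
          rw [← ha]; exact Dgr.link_below hLink
        have hteq : t = t' :=
          (IH t hbelow (N.U.hd e) (N.U.hd e') hehd htt
            (by rw [hehd']; exact htt') hiso').trans hehd'
        rw [← hteq] at hLink'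
        rcases Dgr.combine N hLink hLink' (by rw [ha]; exact htv)
            (by rw [ha']; exact htw) htt with h1 | h1
        · exact absurd ((ha.symm.trans h1).trans ha') hvw
        · exact ⟨a', ha', h1.symm⟩
      · rintro c ⟨a', ha', rfl⟩
        obtain ⟨e, t', hetl, hehd, hLink', htt'⟩ :=
          Dgr.exists_mkE N hXnet hc q a' ha'
        obtain ⟨e', he'tl, hiso2⟩ := Dgr.iso_arc (Dgr.isoSymm hiso) hetl
        obtain ⟨a, t, haa, hehd2, hLink, htt⟩ := Dgr.classify N hXnet hc e'
        rw [he'tl, hpv] at haa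
        have hbelow : Relation.TransGen N.arcRel v t := by
          rw [← haa]; exact Dgr.link_below hLink
        have hteq : t = t' :=
          (IH t hbelow (N.U.hd e') (N.U.hd e) hehd2 htt
            (by rw [hehd]; exact htt') (Dgr.isoSymm hiso2)).trans hehd
        rw [← hteq] at hLink'
        rcases Dgr.combine N hLink hLink' (by rw [haa]; exact htv)
            (by rw [ha']; exact htw) htt with h1 | h1
        · exact absurd ((haa.symm.trans h1).trans ha') hvw
        · exact ⟨a, haa, h1⟩
    · -- leaf case
      have h2 : N.lab q.1.1 = some xx := by rw [hlabeq, hv]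
      exact (hXnet.2.2.2.2 xx).unique hv h2
  rintro ⟨v, w, hne, htv, htw, p, q, hp, hq, hiso⟩
  exact hne ((main v p q hp htv (by rw [show (q.1).1 = w from hq]; exact htw) hiso).trans hq)
end
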